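/- Fix an integer n ≥ 1, masses m₁, m₂ > 0 and exponents γ₁, γ₂ > 1. For 1 ≤ i ≤ n define the flux component A_i(U) := ( (n₁/ρ(U)) w_i , (n₂/ρ(U)) w_i , (w_i/ρ(U)) w + ((γ₁−1)s₁(n₁) + (γ₂−1)s₂(n₂)) e_i ) ∈ ℝ × ℝ × ℝⁿ, where e_i is the i-th standard basis vector of ℝⁿ. Then A_i is Fréchet differentiable at every state U = (n₁, n₂, w) with n₁, n₂ > 0, and for every state V = (ν₁, ν₂, ω) with ν₁, ν₂ ≥ 0 and ρ(V) > 0, the relative flux satisfies A_i(V) − A_i(U) − DA_i(U)(V − U) = ( (n₁/ρ(U) − ν₁/ρ(V)) ρ(V) (u(U)_i − u(V)_i) , (n₂/ρ(U) − ν₂/ρ(V)) ρ(V) (u(U)_i − u(V)_i) , ρ(V)(u(V) − u(U))(u(V)_i − u(U)_i) + (γ₁−1) s₁(ν₁|n₁) e_i + (γ₂−1) s₂(ν₂|n₂) e_i ), where DA_i(U) denotes the Fréchet derivative of A_i at U. -/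

import Mathlib

open MeasureTheory

/-- The isentropic internal-energy function `s(x) = m^{n(γ−1)/2} x^γ/(γ−1)`. -/
noncomputable def sFn (n : ℕ) (m γ : ℝ) (x : ℝ) : ℝ :=
  m ^ ((n : ℝ) * (γ - 1) / 2) * x ^ γ / (γ - 1)

/-- Its derivative `s′(x) = γ m^{n(γ−1)/2} x^{γ−1}/(γ−1)`. -/
noncomputable def sFn' (n : ℕ) (m γ : ℝ) (x : ℝ) : ℝ :=
  γ * m ^ ((n : ℝ) * (γ - 1) / 2) * x ^ (γ - 1) / (γ - 1)

/-- The relative quantity `s(y|x) = s(y) − s(x) − s′(x)(y − x)`. -/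
noncomputable def sRel (n : ℕ) (m γ : ℝ) (y x : ℝ) : ℝ :=
  sFn n m γ y - sFn n m γ x - sFn' n m γ x * (y - x)

/-- The total mass density `ρ(U) = m₁ n₁ + m₂ n₂` of a state `U = (n₁, n₂, w)`. -/
noncomputable def rhoSt {n : ℕ} (m₁ m₂ : ℝ) (U : ℝ × ℝ × EuclideanSpace ℝ (Fin n)) : ℝ :=
  m₁ * U.1 + m₂ * U.2.1

/-- The bulk velocity `u(U) = w/ρ(U)` of a state `U = (n₁, n₂, w)`. -/
noncomputable def uSt {n : ℕ} (m₁ m₂ : ℝ) (U : ℝ × ℝ × EuclideanSpace ℝ (Fin n)) :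
    EuclideanSpace ℝ (Fin n) :=
  (rhoSt m₁ m₂ U)⁻¹ • U.2.2

/-- The `i`-th flux component
`A_i(U) = ((n₁/ρ) w_i, (n₂/ρ) w_i, (w_i/ρ) w + ((γ₁−1)s₁(n₁) + (γ₂−1)s₂(n₂)) e_i)`. -/
noncomputable def fluxA (n : ℕ) (m₁ m₂ γ₁ γ₂ : ℝ) (i : Fin n)
    (U : ℝ × ℝ × EuclideanSpace ℝ (Fin n)) : ℝ × ℝ × EuclideanSpace ℝ (Fin n) :=
  (U.1 / rhoSt m₁ m₂ U * U.2.2 i,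
   U.2.1 / rhoSt m₁ m₂ U * U.2.2 i,
   (U.2.2 i / rhoSt m₁ m₂ U) • U.2.2 +
     ((γ₁ - 1) * sFn n m₁ γ₁ U.1 + (γ₂ - 1) * sFn n m₂ γ₂ U.2.1) •
       EuclideanSpace.single i 1)


lemma sFn_hasDerivAt (n : ℕ) (m γ : ℝ) (hγ : 1 < γ) (x : ℝ) :
    HasDerivAt (sFn n m γ) (sFn' n m γ x) x := by
  have h := ((Real.hasDerivAt_rpow_const (x := x) (p := γ) (Or.inr hγ.le)).const_mul
      (m ^ ((n:ℝ)*(γ-1)/2))).div_const (γ-1)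
  have e : sFn' n m γ x = m ^ ((n:ℝ)*(γ-1)/2) * (γ * x ^ (γ - 1)) / (γ - 1) := by
    unfold sFn'; ring
  rw [e]; exact h

set_option maxHeartbeats 1000000 in
/-- `A_i` is Fréchet differentiable at every state `U = (n₁, n₂, w)` with
`n₁, n₂ > 0`, and for every state `V = (ν₁, ν₂, ω)` with `ν₁, ν₂ ≥ 0` and
`ρ(V) > 0`, the relative flux `A_i(V) − A_i(U) − DA_i(U)(V − U)` equals
`((n₁/ρ(U) − ν₁/ρ(V)) ρ(V)(u(U)_i − u(V)_i),
  (n₂/ρ(U) − ν₂/ρ(V)) ρ(V)(u(U)_i − u(V)_i),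
  ρ(V)(u(V) − u(U))(u(V)_i − u(U)_i) + (γ₁−1)s₁(ν₁|n₁)e_i + (γ₂−1)s₂(ν₂|n₂)e_i)`. -/
theorem flux_differentiableAt_and_relative_flux (n : ℕ) (hn : 1 ≤ n) (m₁ m₂ γ₁ γ₂ : ℝ)
    (hm₁ : 0 < m₁) (hm₂ : 0 < m₂) (hγ₁ : 1 < γ₁) (hγ₂ : 1 < γ₂) (i : Fin n)
    (U : ℝ × ℝ × EuclideanSpace ℝ (Fin n)) (hU1 : 0 < U.1) (hU2 : 0 < U.2.1) :
    DifferentiableAt ℝ (fluxA n m₁ m₂ γ₁ γ₂ i) U ∧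
    ∀ V : ℝ × ℝ × EuclideanSpace ℝ (Fin n), 0 ≤ V.1 → 0 ≤ V.2.1 →
      0 < rhoSt m₁ m₂ V →
      fluxA n m₁ m₂ γ₁ γ₂ i V - fluxA n m₁ m₂ γ₁ γ₂ i U
          - fderiv ℝ (fluxA n m₁ m₂ γ₁ γ₂ i) U (V - U) =
        ((U.1 / rhoSt m₁ m₂ U - V.1 / rhoSt m₁ m₂ V) * rhoSt m₁ m₂ V *
            (uSt m₁ m₂ U i - uSt m₁ m₂ V i),
         (U.2.1 / rhoSt m₁ m₂ U - V.2.1 / rhoSt m₁ m₂ V) * rhoSt m₁ m₂ V *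
            (uSt m₁ m₂ U i - uSt m₁ m₂ V i),
         (rhoSt m₁ m₂ V * (uSt m₁ m₂ V i - uSt m₁ m₂ U i)) •
             (uSt m₁ m₂ V - uSt m₁ m₂ U) +
           ((γ₁ - 1) * sRel n m₁ γ₁ V.1 U.1 + (γ₂ - 1) * sRel n m₂ γ₂ V.2.1 U.2.1) •
             EuclideanSpace.single i 1) := by
  have hρne : m₁ * U.1 + m₂ * U.2.1 ≠ 0 := by nlinarith [mul_pos hm₁ hU1, mul_pos hm₂ hU2]
  have ha : HasFDerivAt (fun W : ℝ × ℝ × EuclideanSpace ℝ (Fin n) => W.1)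
      (ContinuousLinearMap.fst ℝ ℝ (ℝ × EuclideanSpace ℝ (Fin n))) U := hasFDerivAt_fst
  have hb : HasFDerivAt (fun W : ℝ × ℝ × EuclideanSpace ℝ (Fin n) => W.2.1)
      ((ContinuousLinearMap.fst ℝ ℝ (EuclideanSpace ℝ (Fin n))).comp
        (ContinuousLinearMap.snd ℝ ℝ (ℝ × EuclideanSpace ℝ (Fin n)))) U :=
    hasFDerivAt_fst.comp U hasFDerivAt_snd
  have hw : HasFDerivAt (fun W : ℝ × ℝ × EuclideanSpace ℝ (Fin n) => W.2.2)
      ((ContinuousLinearMap.snd ℝ ℝ (EuclideanSpace ℝ (Fin n))).comp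
        (ContinuousLinearMap.snd ℝ ℝ (ℝ × EuclideanSpace ℝ (Fin n)))) U :=
    hasFDerivAt_snd.comp U hasFDerivAt_snd
  have hwi : HasFDerivAt (fun W : ℝ × ℝ × EuclideanSpace ℝ (Fin n) => W.2.2 i)
      ((EuclideanSpace.proj i).comp ((ContinuousLinearMap.snd ℝ ℝ (EuclideanSpace ℝ (Fin n))).comp
        (ContinuousLinearMap.snd ℝ ℝ (ℝ × EuclideanSpace ℝ (Fin n))))) U :=
    HasFDerivAt.comp U (ContinuousLinearMap.hasFDerivAt (EuclideanSpace.proj (𝕜 := ℝ) i)) hw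
  have hρ : HasFDerivAt (fun W : ℝ × ℝ × EuclideanSpace ℝ (Fin n) => m₁ * W.1 + m₂ * W.2.1) _ U :=
    (ha.const_mul m₁).add (hb.const_mul m₂)
  have hinv := (hasDerivAt_inv hρne).comp_hasFDerivAt U hρ
  have h1 := (ha.mul hinv).mul hwi
  have h2 := (hb.mul hinv).mul hwi
  have h3a := (hwi.mul hinv).smul hw
  have hs1 := (sFn_hasDerivAt n m₁ γ₁ hγ₁ U.1).comp_hasFDerivAt U ha
  have hs2 := (sFn_hasDerivAt n m₂ γ₂ hγ₂ U.2.1).comp_hasFDerivAt U hb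
  have hg := (hs1.const_mul (γ₁-1)).add (hs2.const_mul (γ₂-1))
  have h3b := hg.smul (hasFDerivAt_const (𝕜 := ℝ) (EuclideanSpace.single i (1:ℝ)) U)
  have h3 := h3a.add h3b
  have hA := h1.prodMk (h2.prodMk h3)
  have hA' := hA.congr_of_eventuallyEq (f₁ := fluxA n m₁ m₂ γ₁ γ₂ i)
    (Filter.Eventually.of_forall fun W => by
      simp [fluxA, rhoSt, div_eq_mul_inv, Function.comp])
  refine ⟨hA'.differentiableAt, ?_⟩
  intro V hV1 hV2 hρV
  have hρVne : m₁ * V.1 + m₂ * V.2.1 ≠ 0 := by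
    simpa [rhoSt] using hρV.ne'
  rw [hA'.fderiv]
  simp only [ContinuousLinearMap.prod_apply, ContinuousLinearMap.add_apply,
    ContinuousLinearMap.coe_smul', Pi.smul_apply, ContinuousLinearMap.smulRight_apply,
    ContinuousLinearMap.coe_comp', Function.comp_apply, ContinuousLinearMap.coe_fst',
    ContinuousLinearMap.coe_snd', ContinuousLinearMap.neg_apply, neg_smul,
    ContinuousLinearMap.zero_apply, PiLp.proj_apply, smul_eq_mul,
    Prod.fst_sub, Prod.snd_sub, fluxA, rhoSt, uSt, sRel, Prod.mk_sub_mk,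
    Pi.mul_apply, PiLp.smul_apply, PiLp.sub_apply]
  refine Prod.ext ?_ (Prod.ext ?_ ?_)
  · simp only
    have hρVne' : V.1 * m₁ + m₂ * V.2.1 ≠ 0 := by rwa [mul_comm V.1]
    field_simp
    ring
  · simp only
    have hρVne' : m₁ * V.1 + V.2.1 * m₂ ≠ 0 := by rwa [mul_comm V.2.1]
    field_simp
    ring
  · simp only [PiLp.smul_apply, smul_eq_mul]
    match_scalars
    · field_simp
    · field_simp
      ring
    · field_simp
      ring
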